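/- Let α be a type and h : Finset α → ℝ a monotone submodular set function. Then the sequence function f defined on lists over α by f(L) = h(the finite set of elements occurring in L) is ordered-submodular. -/

import Mathlib

/-- A sequence function `f : List α → ℝ` is **ordered-submodular** if for all lists
`A, B` and elements `s, s̄`:
`f(A ++ [s]) − f(A) ≥ f(A ++ [s] ++ B) − f(A ++ [s̄] ++ B)`. -/
def OrderedSubmodular {α : Type*} (f : List α → ℝ) : Prop :=
  ∀ (A B : List α) (s sbar : α),
    f (A ++ [s] ++ B) - f (A ++ [sbar] ++ B) ≤ f (A ++ [s]) - f A

/-- A set function is monotone: `h A ≤ h B` whenever `A ⊆ B`. -/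
def SetMonotone {α : Type*} (h : Finset α → ℝ) : Prop :=
  ∀ A B : Finset α, A ⊆ B → h A ≤ h B

/-- A set function is submodular:
`h(insert x A) − h(A) ≥ h(insert x B) − h(B)` whenever `A ⊆ B`. -/
def SetSubmodular {α : Type*} [DecidableEq α] (h : Finset α → ℝ) : Prop :=
  ∀ A B : Finset α, A ⊆ B → ∀ x : α,
    h (insert x B) - h B ≤ h (insert x A) - h A

/-- if `h` is a monotone submodular set function, then the sequence
function `L ↦ h(L.toFinset)` is ordered-submodular. -/
theorem orderedSubmodular_of_monotone_submodular {α : Type*} [DecidableEq α]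
    (h : Finset α → ℝ) (hmono : SetMonotone h) (hsub : SetSubmodular h) :
    OrderedSubmodular (fun L : List α => h L.toFinset) := by
  intro A B s sbar
  simp only
  have e1 : (A ++ [s] ++ B).toFinset = insert s (A.toFinset ∪ B.toFinset) := by
    simp [List.toFinset_append]
  have e2 : (A ++ [sbar] ++ B).toFinset = insert sbar (A.toFinset ∪ B.toFinset) := by
    simp [List.toFinset_append]
  have e3 : (A ++ [s]).toFinset = insert s A.toFinset := by
    simp [List.toFinset_append, Finset.insert_eq, Finset.union_comm, -Finset.union_singleton]
  rw [e1, e2, e3]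
  set T := A.toFinset ∪ B.toFinset
  have h1 : h (insert s T) - h T ≤ h (insert s A.toFinset) - h A.toFinset :=
    hsub _ _ (Finset.subset_union_left) s
  have h2 : h T ≤ h (insert sbar T) := hmono _ _ (Finset.subset_insert _ _)
  linarith
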